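/- For every t = 0,…,T−1 and every x ∈ ℝ, the cost of the approximate policy satisfies v^{s,S}_t(x) = V_t(x) − c_t·x + ε_t(x), where ε_{T−1} :≡ 0. -/

import Mathlib

open MeasureTheory Filter Set

lemma aux_ae_nonneg (μ : MeasureTheory.Measure ℝ) (h : μ (Set.Iio 0) = 0) :
    ∀ᵐ ξ ∂μ, (0:ℝ) ≤ ξ := by
  rw [MeasureTheory.ae_iff]
  have h2 : {ξ : ℝ | ¬ (0:ℝ) ≤ ξ} = Set.Iio 0 := by ext ξ; simp [not_le]
  rw [h2]; exact h

lemma aux_integrable (μ : MeasureTheory.Measure ℝ) [MeasureTheory.IsProbabilityMeasure μ]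
    (hμ : μ (Set.Iio 0) = 0) (g : ℝ → ℝ) (hg : Measurable g) (y M : ℝ)
    (hM : ∀ z, z ≤ y → |g z| ≤ M) :
    MeasureTheory.Integrable (fun ξ => g (y - ξ)) μ := by
  refine MeasureTheory.Integrable.mono' (MeasureTheory.integrable_const M)
    ((hg.comp (measurable_const.sub measurable_id)).aestronglyMeasurable) ?_
  filter_upwards [aux_ae_nonneg μ hμ] with ξ hξ
  simpa [Real.norm_eq_abs] using hM (y - ξ) (by linarith)

lemma aux_abs_integral_le (μ : MeasureTheory.Measure ℝ) [MeasureTheory.IsProbabilityMeasure μ]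
    (hμ : μ (Set.Iio 0) = 0) (g : ℝ → ℝ) (y M : ℝ)
    (hM : ∀ z, z ≤ y → |g z| ≤ M) :
    |∫ ξ, g (y - ξ) ∂μ| ≤ M := by
  have h := MeasureTheory.norm_integral_le_of_norm_le_const
      (μ := μ) (f := fun ξ => g (y - ξ)) (C := M) ?_
  · simpa [Real.norm_eq_abs, measure_univ] using h
  · filter_upwards [aux_ae_nonneg μ hμ] with ξ hξ
    simpa [Real.norm_eq_abs] using hM (y - ξ) (by linarith)

theorem stmt6
    (T : ℕ) (hT : 2 ≤ T)
    (α : ℝ) (hα0 : 0 < α) (hα1 : α ≤ 1)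
    (K : ℕ → ℝ) (hK0 : ∀ t, t < T → 0 ≤ K t)
    (hKmono : ∀ t, t + 2 ≤ T → α * K (t + 1) ≤ K t)
    (ν : ℕ → MeasureTheory.Measure ℝ)
    (hprob : ∀ t, MeasureTheory.IsProbabilityMeasure (ν t))
    (hpos : ∀ t, ν t (Set.Iio 0) = 0)
    (F : ℕ → ℝ → ℝ) (hF : ∀ t x, F t x = (ν t (Set.Iic x)).toReal)
    (C : ℕ → ℝ → ℝ)
    (hCconv : ∀ t, t < T → ConvexOn ℝ Set.univ (C t))
    (hCcoer : ∀ t, t < T → Filter.Tendsto (C t) (Filter.cocompact ℝ) Filter.atTop)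
    (θ : ℝ) (hθ : 0 < θ)
    (f : ℕ → ℤ → ℝ)
    (hf : ∀ t (n : ℤ), f t n = F t (((n : ℝ) + 1) * θ) - F t ((n : ℝ) * θ))
    (Cm SU : ℕ → ℝ)
    (hCm : ∀ t, t < T → IsLeast {x | ∀ y, C t x ≤ C t y} (Cm t))
    (hSU : ∀ t, t < T → ∀ n0 : ℤ, (n0 : ℝ) * θ < Cm t → Cm t ≤ ((n0 : ℝ) + 1) * θ →
      IsLeast {w | (∃ m : ℤ, w = (m : ℝ) * θ) ∧ Cm t ≤ w ∧ C t ((n0 : ℝ) * θ) + K t < C t w} (SU t))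
    (s S : ℕ → ℝ) (I Ibar : ℕ → ℝ)
    (hsT1a : s (T - 1) ≤ Cm (T - 1))
    (hsT1b : C (T - 1) (s (T - 1)) = C (T - 1) (Cm (T - 1)) + K (T - 1))
    (hIbarT1 : Ibar (T - 1) = s (T - 1))
    (hI : ∀ t, t + 2 ≤ T →
      IsGreatest {w | (∃ m : ℤ, w = (m : ℝ) * θ) ∧ w < min (Ibar (t + 1) - θ) (Cm t)} (I t))
    (hIbar : ∀ t, t + 2 ≤ T →
      IsGreatest {w | (∃ m : ℤ, w = (m : ℝ) * θ) ∧ w ≤ I t ∧ C t (I t) + K t < C t w} (Ibar t - θ))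
    (H V : ℕ → ℝ → ℝ)
    (hHT1 : ∀ y, H (T - 1) y = C (T - 1) y)
    (hST1 : S (T - 1) = Cm (T - 1))
    (hV : ∀ t, t < T → ∀ y, V t y = if y < s t then H t (S t) + K t else H t y)
    (hHrec : ∀ t, t + 2 ≤ T → ∀ y,
      H t y = C t y + α * ∑' n : ℕ, V (t + 1) (y - ((n : ℝ) - 1) * θ) * f t ((n : ℤ) - 1))
    (hSdef : ∀ t, t + 2 ≤ T →
      IsGreatest {w | (∃ m : ℤ, w = (m : ℝ) * θ) ∧ I t ≤ w ∧ w ≤ SU t ∧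
        ∀ u, (∃ n : ℤ, u = (n : ℝ) * θ) → I t ≤ u → u ≤ SU t → H t w ≤ H t u} (S t))
    (hsdef0 : ∀ t, t + 2 ≤ T → K t = 0 → s t = S t)
    (hsdef1 : ∀ t, t + 2 ≤ T → 0 < K t →
      IsLeast {w | (∃ m : ℤ, w = (m : ℝ) * θ) ∧ Ibar t ≤ w ∧ w ≤ S t ∧ H t w ≤ H t (S t) + K t} (s t))
    (c : ℕ → ℝ) (G : ℕ → ℝ → ℝ)
    (hDint : ∀ t, t < T → MeasureTheory.Integrable (fun ξ : ℝ => ξ) (ν t))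
    (hCdef : ∀ t, t < T → ∀ y,
      C t y = (c t - α * c (t + 1)) * y + G t y + α * c (t + 1) * ∫ ξ, ξ ∂(ν t))
    (vsS : ℕ → ℝ → ℝ)
    (hvsST : ∀ x, vsS T x = -(c T) * x)
    (hvsSRec : ∀ t, t < T → ∀ x, vsS t x =
      (if x < s t then K t else 0)
        + c t * ((if x < s t then S t else x) - x)
        + G t (if x < s t then S t else x)
        + α * ∫ ξ, vsS (t + 1) ((if x < s t then S t else x) - ξ) ∂(ν t))
    (A : ℕ → ℝ → ℝ)
    (hA : ∀ t, 1 ≤ t → t < T → ∀ x, A t x =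
      (∫ ξ, V t (x - ξ) ∂(ν (t - 1)))
        - ∑' n : ℕ, V t (x - ((n : ℝ) - 1) * θ) * f (t - 1) ((n : ℤ) - 1))
    (eps : ℕ → ℝ → ℝ)
    (hepsT1 : ∀ x, eps (T - 1) x = 0)
    (heps : ∀ t, t + 2 ≤ T → ∀ x, eps t x =
      if x < s t then α * A (t + 1) (S t) + α * ∫ ξ, eps (t + 1) (S t - ξ) ∂(ν t)
      else α * A (t + 1) x + α * ∫ ξ, eps (t + 1) (x - ξ) ∂(ν t))
    :
    ∀ t, t < T → ∀ x, vsS t x = V t x - c t * x + eps t x := by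
  classical
  -- Basic facts about F and f
  have hFnn : ∀ u x, 0 ≤ F u x := fun u x => by rw [hF]; exact ENNReal.toReal_nonneg
  have hFle1 : ∀ u x, F u x ≤ 1 := by
    intro u x
    haveI := hprob u
    rw [hF]
    have h1 : ν u (Set.Iic x) ≤ 1 := prob_le_one
    calc (ν u (Set.Iic x)).toReal ≤ (1 : ENNReal).toReal :=
          ENNReal.toReal_mono ENNReal.one_ne_top h1
      _ = 1 := by simp
  have hFmono : ∀ u (a b : ℝ), a ≤ b → F u a ≤ F u b := by
    intro u a b hab
    haveI := hprob u
    rw [hF, hF]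
    exact ENNReal.toReal_mono (measure_ne_top _ _) (measure_mono (Set.Iic_subset_Iic.2 hab))
  have hfnn : ∀ u (n : ℤ), 0 ≤ f u n := by
    intro u n
    rw [hf]
    have h := hFmono u ((n:ℝ) * θ) (((n:ℝ) + 1) * θ) (by nlinarith [hθ.le])
    linarith
  have htel : ∀ u (N : ℕ), ∑ n ∈ Finset.range N, f u ((n:ℤ) - 1)
      = F u (((N:ℝ) - 1) * θ) - F u (((0:ℝ) - 1) * θ) := by
    intro u N
    induction N with
    | zero => simp
    | succ N ihN =>
      rw [Finset.sum_range_succ, ihN, hf]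
      push_cast
      ring_nf
  have hfsummable : ∀ u, Summable (fun n : ℕ => f u ((n:ℤ) - 1)) := by
    intro u
    refine summable_of_sum_range_le (c := 1) (fun n => hfnn u _) (fun N => ?_)
    rw [htel]
    have h1 := hFle1 u (((N:ℝ) - 1) * θ)
    have h2 := hFnn u (((0:ℝ) - 1) * θ)
    linarith
  have hftsum_le : ∀ u, (∑' n : ℕ, f u ((n:ℤ) - 1)) ≤ 1 := by
    intro u
    refine Real.tsum_le_of_sum_range_le (fun n => hfnn u _) (fun N => ?_)
    rw [htel]
    have h1 := hFle1 u (((N:ℝ) - 1) * θ)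
    have h2 := hFnn u (((0:ℝ) - 1) * θ)
    linarith
  -- Summability of the generic series
  have hsummand : ∀ u (W : ℝ → ℝ), (∀ a : ℝ, ∃ M, ∀ z ≤ a, |W z| ≤ M) → ∀ z : ℝ,
      Summable (fun n : ℕ => W (z - ((n:ℝ) - 1) * θ) * f u ((n:ℤ) - 1)) := by
    intro u W hWb z
    obtain ⟨M, hM⟩ := hWb (z + θ)
    refine Summable.of_norm_bounded (g := fun n => M * f u ((n:ℤ) - 1))
      ((hfsummable u).mul_left M) ?_
    intro n
    rw [Real.norm_eq_abs, abs_mul, abs_of_nonneg (hfnn u _)]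
    refine mul_le_mul_of_nonneg_right (hM _ ?_) (hfnn u _)
    have hn : (0:ℝ) ≤ (n:ℝ) := Nat.cast_nonneg n
    nlinarith [hθ.le]
  have htsum_bound : ∀ u (W : ℝ → ℝ), (∀ a : ℝ, ∃ M, ∀ z ≤ a, |W z| ≤ M) →
      ∀ a : ℝ, ∃ M, ∀ z ≤ a,
        |∑' n : ℕ, W (z - ((n:ℝ) - 1) * θ) * f u ((n:ℤ) - 1)| ≤ M := by
    intro u W hWb a
    obtain ⟨M, hM⟩ := hWb (a + θ)
    have hM0 : 0 ≤ M := le_trans (abs_nonneg _) (hM a (by linarith [hθ.le]))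
    refine ⟨M, fun z hz => ?_⟩
    have hnorm : ∀ n : ℕ, ‖W (z - ((n:ℝ) - 1) * θ) * f u ((n:ℤ) - 1)‖
        ≤ M * f u ((n:ℤ) - 1) := by
      intro n
      rw [Real.norm_eq_abs, abs_mul, abs_of_nonneg (hfnn u _)]
      refine mul_le_mul_of_nonneg_right (hM _ ?_) (hfnn u _)
      have hn : (0:ℝ) ≤ (n:ℝ) := Nat.cast_nonneg n
      nlinarith [hθ.le]
    have hsn : Summable (fun n : ℕ => ‖W (z - ((n:ℝ) - 1) * θ) * f u ((n:ℤ) - 1)‖) :=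
      Summable.of_nonneg_of_le (fun n => norm_nonneg _) hnorm ((hfsummable u).mul_left M)
    calc |∑' n : ℕ, W (z - ((n:ℝ) - 1) * θ) * f u ((n:ℤ) - 1)|
        ≤ ∑' n : ℕ, ‖W (z - ((n:ℝ) - 1) * θ) * f u ((n:ℤ) - 1)‖ := by
          rw [← Real.norm_eq_abs]; exact norm_tsum_le_tsum_norm hsn
      _ ≤ ∑' n : ℕ, M * f u ((n:ℤ) - 1) :=
          Summable.tsum_le_tsum hnorm hsn ((hfsummable u).mul_left M)
      _ = M * ∑' n : ℕ, f u ((n:ℤ) - 1) := tsum_mul_left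
      _ ≤ M * 1 := mul_le_mul_of_nonneg_left (hftsum_le u) hM0
      _ = M := mul_one M
  have htsum_meas : ∀ u (W : ℝ → ℝ), Measurable W → (∀ a : ℝ, ∃ M, ∀ z ≤ a, |W z| ≤ M) →
      Measurable (fun z => ∑' n : ℕ, W (z - ((n:ℝ) - 1) * θ) * f u ((n:ℤ) - 1)) := by
    intro u W hWm hWb
    apply measurable_of_tendsto_metrizable
      (f := fun N z => ∑ n ∈ Finset.range N, W (z - ((n:ℝ) - 1) * θ) * f u ((n:ℤ) - 1))
    · intro N
      exact Finset.measurable_sum _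
        (fun n _ => (hWm.comp (measurable_id.sub measurable_const)).mul_const _)
    · rw [tendsto_pi_nhds]
      intro z
      exact ((hsummand u W hWb z).hasSum).tendsto_sum_nat
  have hmeas_int : ∀ u (W : ℝ → ℝ), Measurable W →
      Measurable (fun z => ∫ ξ, W (z - ξ) ∂(ν u)) := by
    intro u W hWm
    haveI := hprob u
    have h : StronglyMeasurable (fun p : ℝ × ℝ => W (p.1 - p.2)) :=
      (hWm.comp (measurable_fst.sub measurable_snd)).stronglyMeasurable
    exact h.integral_prod_right'.measurable
  -- Continuity and boundedness of C
  have hCcont : ∀ u, u < T → Continuous (C u) := by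
    intro u hu
    have h := ConvexOn.continuousOn isOpen_univ (hCconv u hu)
    rw [← continuousOn_univ]
    exact h
  have hCbd : ∀ u, u < T → ∀ b a : ℝ, ∃ M, ∀ z, b ≤ z → z ≤ a → |C u z| ≤ M := by
    intro u hu b a
    refine ⟨|C u (Cm u)| + |C u b| + |C u a|, fun z hbz hza => ?_⟩
    have hlow : C u (Cm u) ≤ C u z := (hCm u hu).1 z
    have hup : C u z ≤ max (C u b) (C u a) := by
      refine (hCconv u hu).le_on_segment (Set.mem_univ b) (Set.mem_univ a) ?_
      rw [segment_eq_Icc (le_trans hbz hza)]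
      exact ⟨hbz, hza⟩
    have h1 : -|C u (Cm u)| ≤ C u (Cm u) := neg_abs_le _
    have h2 : max (C u b) (C u a) ≤ |C u b| + |C u a| :=
      max_le (by have := abs_nonneg (C u a); have := le_abs_self (C u b); linarith)
        (by have := abs_nonneg (C u b); have := le_abs_self (C u a); linarith)
    have h3 := abs_nonneg (C u b)
    have h4 := abs_nonneg (C u a)
    have h5 := abs_nonneg (C u (Cm u))
    rw [abs_le]
    constructor <;> linarith
  -- Main downward induction
  have key : ∀ k t, t + k + 1 = T →
      Measurable (V t) ∧ (∀ a : ℝ, ∃ M, ∀ z ≤ a, |V t z| ≤ M) ∧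
      Measurable (eps t) ∧ (∀ a : ℝ, ∃ M, ∀ z ≤ a, |eps t z| ≤ M) ∧
      (∀ x, vsS t x = V t x - c t * x + eps t x) := by
    intro k
    induction k with
    | zero =>
      intro t ht
      have htT : T - 1 = t := by omega
      have htlt : t < T := by omega
      have ht1 : t + 1 = T := by omega
      rw [htT] at hHT1 hST1 hepsT1
      have hVt : ∀ y, V t y = if y < s t then C t (Cm t) + K t else C t y := by
        intro y
        rw [hV t htlt y]
        simp only [hHT1, hST1]
      have hVm : Measurable (V t) := by
        have h : V t = fun y => if y < s t then C t (Cm t) + K t else C t y := funext hVt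
        rw [h]
        exact Measurable.ite measurableSet_Iio measurable_const (hCcont t htlt).measurable
      have hVb : ∀ a : ℝ, ∃ M, ∀ z ≤ a, |V t z| ≤ M := by
        intro a
        obtain ⟨M, hM⟩ := hCbd t htlt (s t) (max a (s t))
        have hM0 : 0 ≤ M := le_trans (abs_nonneg _) (hM (s t) le_rfl (le_max_right a (s t)))
        refine ⟨|C t (Cm t) + K t| + M, fun z hz => ?_⟩
        rw [hVt z]
        by_cases hzs : z < s t
        · rw [if_pos hzs]
          have := le_abs_self (C t (Cm t) + K t)
          have := abs_nonneg (C t (Cm t) + K t)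
          have := neg_abs_le (C t (Cm t) + K t)
          rw [abs_le]; constructor <;> linarith
        · rw [if_neg hzs]
          have h1 : |C t z| ≤ M := hM z (not_lt.1 hzs) (le_trans hz (le_max_left a (s t)))
          have := abs_nonneg (C t (Cm t) + K t)
          linarith
      have hEm : Measurable (eps t) := by
        have h : eps t = fun _ => (0:ℝ) := funext hepsT1
        rw [h]; exact measurable_const
      have hEb : ∀ a : ℝ, ∃ M, ∀ z ≤ a, |eps t z| ≤ M := by
        intro a
        exact ⟨0, fun z _ => by rw [hepsT1]; simp⟩
      refine ⟨hVm, hVb, hEm, hEb, ?_⟩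
      intro x
      haveI := hprob t
      have hlinint : ∀ y : ℝ, ∫ ξ, vsS T (y - ξ) ∂(ν t)
          = -(c T) * y + c T * ∫ ξ, ξ ∂(ν t) := by
        intro y
        have h1 : (fun ξ : ℝ => vsS T (y - ξ)) = fun ξ => -(c T) * y + c T * ξ := by
          funext ξ; rw [hvsST]; ring
        rw [h1, integral_add (integrable_const _) ((hDint t htlt).const_mul (c T)),
          integral_const, integral_const_mul]
        simp [measure_univ]
      by_cases hxs : x < s t
      · have hrec := hvsSRec t htlt x
        rw [ht1] at hrec
        simp only [if_pos hxs] at hrec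
        rw [hST1] at hrec
        rw [hrec, hlinint (Cm t), hVt x, if_pos hxs, hepsT1 x]
        have hc := hCdef t htlt (Cm t)
        rw [ht1] at hc
        rw [hc]
        ring
      · have hrec := hvsSRec t htlt x
        rw [ht1] at hrec
        simp only [if_neg hxs] at hrec
        rw [hrec, hlinint x, hVt x, if_neg hxs, hepsT1 x]
        have hc := hCdef t htlt x
        rw [ht1] at hc
        rw [hc]
        ring
    | succ k ih =>
      intro t ht
      have htlt : t < T := by omega
      have ht2 : t + 2 ≤ T := by omega
      obtain ⟨hVm1, hVb1, hEm1, hEb1, hid1⟩ := ih (t + 1) (by omega)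
      haveI := hprob t
      have hA' := hA (t + 1) (by omega) (by omega)
      simp only [Nat.add_sub_cancel] at hA'
      -- facts about H t
      have hHm : Measurable (H t) := by
        have h : H t = fun y => C t y
            + α * ∑' n : ℕ, V (t + 1) (y - ((n:ℝ) - 1) * θ) * f t ((n:ℤ) - 1) :=
          funext (hHrec t ht2)
        rw [h]
        exact (hCcont t htlt).measurable.add
          ((htsum_meas t (V (t + 1)) hVm1 hVb1).const_mul α)
      have hHb : ∀ a : ℝ, ∃ M, ∀ z, s t ≤ z → z ≤ a → |H t z| ≤ M := by
        intro a
        obtain ⟨MC, hMC⟩ := hCbd t htlt (s t) (max a (s t))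
        obtain ⟨MT, hMT⟩ := htsum_bound t (V (t + 1)) hVb1 (max a (s t))
        refine ⟨MC + α * MT, fun z hsz hza => ?_⟩
        rw [hHrec t ht2 z]
        have h1 : |C t z| ≤ MC := hMC z hsz (le_trans hza (le_max_left a (s t)))
        have h2 : |∑' n : ℕ, V (t + 1) (z - ((n:ℝ) - 1) * θ) * f t ((n:ℤ) - 1)| ≤ MT :=
          hMT z (le_trans hza (le_max_left a (s t)))
        calc |C t z + α * ∑' n : ℕ, V (t + 1) (z - ((n:ℝ) - 1) * θ) * f t ((n:ℤ) - 1)|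
            ≤ |C t z| + |α * ∑' n : ℕ, V (t + 1) (z - ((n:ℝ) - 1) * θ) * f t ((n:ℤ) - 1)| :=
              abs_add_le _ _
          _ ≤ MC + α * MT := by
              rw [abs_mul, abs_of_pos hα0]
              have : α * |∑' n : ℕ, V (t + 1) (z - ((n:ℝ) - 1) * θ) * f t ((n:ℤ) - 1)|
                  ≤ α * MT := mul_le_mul_of_nonneg_left h2 hα0.le
              linarith
      have hVm : Measurable (V t) := by
        have h : V t = fun y => if y < s t then H t (S t) + K t else H t y :=
          funext (hV t htlt)
        rw [h]
        exact Measurable.ite measurableSet_Iio measurable_const hHm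
      have hVb : ∀ a : ℝ, ∃ M, ∀ z ≤ a, |V t z| ≤ M := by
        intro a
        obtain ⟨M, hM⟩ := hHb (max a (s t))
        refine ⟨|H t (S t) + K t| + |M|, fun z hz => ?_⟩
        rw [hV t htlt z]
        by_cases hzs : z < s t
        · rw [if_pos hzs]
          have := le_abs_self (H t (S t) + K t)
          have := neg_abs_le (H t (S t) + K t)
          have := abs_nonneg M
          rw [abs_le]; constructor <;> linarith
        · rw [if_neg hzs]
          have h1 : |H t z| ≤ M := hM z (not_lt.1 hzs)
            (le_trans hz (le_max_left a (s t)))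
          have := abs_nonneg (H t (S t) + K t)
          have := le_abs_self M
          linarith
      -- facts about A (t+1)
      have hAm : Measurable (A (t + 1)) := by
        have h : A (t + 1) = fun x => (∫ ξ, V (t + 1) (x - ξ) ∂(ν t))
            - ∑' n : ℕ, V (t + 1) (x - ((n:ℝ) - 1) * θ) * f t ((n:ℤ) - 1) := funext hA'
        rw [h]
        exact (hmeas_int t (V (t + 1)) hVm1).sub (htsum_meas t (V (t + 1)) hVm1 hVb1)
      have hAb : ∀ a : ℝ, ∃ M, ∀ z ≤ a, |A (t + 1) z| ≤ M := by
        intro a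
        obtain ⟨MV, hMV⟩ := hVb1 a
        obtain ⟨MT, hMT⟩ := htsum_bound t (V (t + 1)) hVb1 a
        refine ⟨MV + MT, fun z hz => ?_⟩
        rw [hA' z]
        have h1 : |∫ ξ, V (t + 1) (z - ξ) ∂(ν t)| ≤ MV :=
          aux_abs_integral_le (ν t) (hpos t) (V (t + 1)) z MV
            (fun w hw => hMV w (le_trans hw hz))
        have h2 := hMT z hz
        calc |(∫ ξ, V (t + 1) (z - ξ) ∂(ν t))
              - ∑' n : ℕ, V (t + 1) (z - ((n:ℝ) - 1) * θ) * f t ((n:ℤ) - 1)|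
            ≤ |∫ ξ, V (t + 1) (z - ξ) ∂(ν t)|
              + |∑' n : ℕ, V (t + 1) (z - ((n:ℝ) - 1) * θ) * f t ((n:ℤ) - 1)| := abs_sub _ _
          _ ≤ MV + MT := add_le_add h1 h2
      -- facts about eps t
      have hEm : Measurable (eps t) := by
        have h : eps t = fun x => if x < s t
            then α * A (t + 1) (S t) + α * ∫ ξ, eps (t + 1) (S t - ξ) ∂(ν t)
            else α * A (t + 1) x + α * ∫ ξ, eps (t + 1) (x - ξ) ∂(ν t) :=
          funext (heps t ht2)
        rw [h]
        exact Measurable.ite measurableSet_Iio measurable_const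
          ((hAm.const_mul α).add ((hmeas_int t (eps (t + 1)) hEm1).const_mul α))
      have hEb : ∀ a : ℝ, ∃ M, ∀ z ≤ a, |eps t z| ≤ M := by
        intro a
        obtain ⟨MA, hMA⟩ := hAb a
        obtain ⟨ME, hME⟩ := hEb1 a
        refine ⟨|α * A (t + 1) (S t) + α * ∫ ξ, eps (t + 1) (S t - ξ) ∂(ν t)|
          + α * |MA| + α * |ME|, fun z hz => ?_⟩
        rw [heps t ht2 z]
        have hMA0 := abs_nonneg MA
        have hME0 := abs_nonneg ME
        by_cases hzs : z < s t
        · rw [if_pos hzs]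
          have := le_abs_self (α * A (t + 1) (S t) + α * ∫ ξ, eps (t + 1) (S t - ξ) ∂(ν t))
          have := neg_abs_le (α * A (t + 1) (S t) + α * ∫ ξ, eps (t + 1) (S t - ξ) ∂(ν t))
          rw [abs_le]
          constructor <;> nlinarith
        · rw [if_neg hzs]
          have h1 : |A (t + 1) z| ≤ |MA| := le_trans (hMA z hz) (le_abs_self MA)
          have h2 : |∫ ξ, eps (t + 1) (z - ξ) ∂(ν t)| ≤ |ME| :=
            le_trans (aux_abs_integral_le (ν t) (hpos t) (eps (t + 1)) z ME
              (fun w hw => hME w (le_trans hw hz))) (le_abs_self ME)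
          have h3 : |α * A (t + 1) z + α * ∫ ξ, eps (t + 1) (z - ξ) ∂(ν t)|
              ≤ α * |MA| + α * |ME| := by
            calc |α * A (t + 1) z + α * ∫ ξ, eps (t + 1) (z - ξ) ∂(ν t)|
                ≤ |α * A (t + 1) z| + |α * ∫ ξ, eps (t + 1) (z - ξ) ∂(ν t)| := abs_add_le _ _
              _ ≤ α * |MA| + α * |ME| := by
                  rw [abs_mul, abs_mul, abs_of_pos hα0]
                  exact add_le_add (mul_le_mul_of_nonneg_left h1 hα0.le)
                    (mul_le_mul_of_nonneg_left h2 hα0.le)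
          have := abs_nonneg (α * A (t + 1) (S t) + α * ∫ ξ, eps (t + 1) (S t - ξ) ∂(ν t))
          linarith
      refine ⟨hVm, hVb, hEm, hEb, ?_⟩
      intro x
      have hmain : ∀ y : ℝ, ∫ ξ, vsS (t + 1) (y - ξ) ∂(ν t)
          = (∫ ξ, V (t + 1) (y - ξ) ∂(ν t))
            - (c (t + 1) * y - c (t + 1) * ∫ ξ, ξ ∂(ν t))
            + ∫ ξ, eps (t + 1) (y - ξ) ∂(ν t) := by
        intro y
        obtain ⟨MV, hMV⟩ := hVb1 y
        obtain ⟨ME, hME⟩ := hEb1 y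
        have hiV : Integrable (fun ξ => V (t + 1) (y - ξ)) (ν t) :=
          aux_integrable (ν t) (hpos t) _ hVm1 y MV hMV
        have hiE : Integrable (fun ξ => eps (t + 1) (y - ξ)) (ν t) :=
          aux_integrable (ν t) (hpos t) _ hEm1 y ME hME
        have hiL : Integrable (fun ξ : ℝ => c (t + 1) * y - c (t + 1) * ξ) (ν t) :=
          (integrable_const _).sub ((hDint t htlt).const_mul _)
        have hcongr : (fun ξ => vsS (t + 1) (y - ξ))
            = fun ξ => (V (t + 1) (y - ξ) - (c (t + 1) * y - c (t + 1) * ξ))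
              + eps (t + 1) (y - ξ) := by
          funext ξ
          rw [hid1 (y - ξ)]
          ring
        have hiVL : Integrable (fun ξ : ℝ => V (t + 1) (y - ξ)
            - (c (t + 1) * y - c (t + 1) * ξ)) (ν t) := hiV.sub hiL
        rw [hcongr, integral_add hiVL hiE, integral_sub hiV hiL,
          integral_sub (integrable_const _) ((hDint t htlt).const_mul _),
          integral_const, integral_const_mul]
        simp [measure_univ]
      by_cases hxs : x < s t
      · have hrec := hvsSRec t htlt x
        simp only [if_pos hxs] at hrec
        rw [hrec, hmain (S t), hV t htlt x, if_pos hxs, heps t ht2 x, if_pos hxs,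
          hHrec t ht2 (S t), hA' (S t), hCdef t htlt (S t)]
        ring
      · have hrec := hvsSRec t htlt x
        simp only [if_neg hxs] at hrec
        rw [hrec, hmain x, hV t htlt x, if_neg hxs, heps t ht2 x, if_neg hxs,
          hHrec t ht2 x, hA' x, hCdef t htlt x]
        ring
  intro t ht x
  obtain ⟨k, hk⟩ : ∃ k, t + k + 1 = T := ⟨T - t - 1, by omega⟩
  exact (key k t hk).2.2.2.2 x
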